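/- Let A ∈ ℝ^{n×N} be a Parseval frame and T ⊆ {1,…,N} with |T| < n such that A_T* A_T and A_{T^c} A_{T^c}* are invertible. Then (A_{T^c} A_{T^c}*)^k converges, as k → ∞, to I − A_T (A_T* A_T)^{-1} A_T*. -/

import Mathlib

open Matrix Finset Filter Topology

/-- Euclidean norm of a vector. -/
noncomputable def enorm {k : ℕ} (x : Fin k → ℝ) : ℝ := Real.sqrt (∑ i, x i ^ 2)

/-- `x` has at most `s` nonzero entries. -/
def IsSparse {k : ℕ} (s : ℕ) (x : Fin k → ℝ) : Prop :=
  (Finset.univ.filter fun i => x i ≠ 0).card ≤ s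

/-- Spectral norm (ℓ²-operator norm) of a matrix. -/
noncomputable def specNorm {m k : Type*} [Fintype m] [Fintype k] [DecidableEq k]
    (M : Matrix m k ℝ) : ℝ :=
  ‖LinearMap.toContinuousLinearMap (Matrix.toEuclideanLin M)‖

/-- `cols A T` is the submatrix of `A` consisting of the columns indexed by `T`. -/
def cols {n N : ℕ} (A : Matrix (Fin n) (Fin N) ℝ) (T : Finset (Fin N)) :
    Matrix (Fin n) {i : Fin N // i ∈ T} ℝ := Matrix.of fun r c => A r c.1

/-- `subv x T` is the subvector of `x` consisting of the entries indexed by `T`. -/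
def subv {N : ℕ} (x : Fin N → ℝ) (T : Finset (Fin N)) : {i : Fin N // i ∈ T} → ℝ :=
  fun i => x i.1

/-- The feedback term `(A_T* A_T)⁻¹ A_T* A_{Tᶜ} x_{Tᶜ}`. -/
noncomputable def fb {n N : ℕ} (A : Matrix (Fin n) (Fin N) ℝ) (T : Finset (Fin N))
    (x : Fin N → ℝ) : {i : Fin N // i ∈ T} → ℝ :=
  ((cols A T)ᵀ * cols A T)⁻¹ *ᵥ ((cols A T)ᵀ *ᵥ (cols A Tᶜ *ᵥ subv x Tᶜ))

lemma herm_pow_tendsto_zero {m : ℕ} {R : Matrix (Fin m) (Fin m) ℝ} (hR : R.IsHermitian)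
    (h : ∀ i, |hR.eigenvalues i| < 1) :
    Tendsto (fun k => R ^ k) atTop (nhds 0) := by
  set U : Matrix (Fin m) (Fin m) ℝ := (Matrix.IsHermitian.eigenvectorUnitary hR : Matrix (Fin m) (Fin m) ℝ) with hU
  have hmem := (Matrix.IsHermitian.eigenvectorUnitary hR).2
  have hUU : star U * U = 1 := Matrix.mem_unitaryGroup_iff'.mp hmem
  have hUU' : U * star U = 1 := Matrix.mem_unitaryGroup_iff.mp hmem
  have hspec := hR.spectral_theorem
  set d : Fin m → ℝ := hR.eigenvalues with hd
  have hDdef : (RCLike.ofReal ∘ d : Fin m → ℝ) = d := by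
    funext i; simp [RCLike.ofReal]
  rw [hDdef, Unitary.conjStarAlgAut_apply, ← hU] at hspec
  have hmid : ∀ X Y : Matrix (Fin m) (Fin m) ℝ,
      (U * X * star U) * (U * Y * star U) = U * (X * Y) * star U := by
    intro X Y
    calc (U * X * star U) * (U * Y * star U)
        = U * (X * ((star U * U) * (Y * star U))) := by
          simp only [Matrix.mul_assoc]
      _ = U * (X * Y) * star U := by rw [hUU]; simp only [Matrix.one_mul, Matrix.mul_assoc]
  have hpow : ∀ k, R ^ k = U * (Matrix.diagonal d) ^ k * star U := by
    intro k
    induction k with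
    | zero => simp [pow_zero, hUU']
    | succ k ih =>
      rw [pow_succ, ih, hspec, hmid, ← pow_succ]
  have hDk : ∀ k, (Matrix.diagonal d) ^ k = Matrix.diagonal (fun i => d i ^ k) := by
    intro k; rw [Matrix.diagonal_pow]; rfl
  have hDlim : Tendsto (fun k => (Matrix.diagonal d) ^ k) atTop (nhds 0) := by
    simp only [hDk]
    refine tendsto_pi_nhds.mpr ?_
    intro i
    rw [tendsto_pi_nhds]
    intro j
    by_cases hij : i = j
    · subst hij
      simp only [Matrix.diagonal_apply_eq]
      have := tendsto_pow_atTop_nhds_zero_of_abs_lt_one (h i)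
      simpa using this
    · simp only [Matrix.diagonal_apply_ne _ hij]
      change Tendsto (fun _ : ℕ => (0:ℝ)) atTop (nhds ((0 : Matrix (Fin m) (Fin m) ℝ) i j))
      simp [tendsto_const_nhds]
  have hcont : Continuous fun X : Matrix (Fin m) (Fin m) ℝ => U * X * star U :=
    (continuous_const.matrix_mul continuous_id).matrix_mul continuous_const
  have := (hcont.tendsto 0).comp hDlim
  simp only [Function.comp, Matrix.mul_zero, Matrix.zero_mul] at this
  convert this using 1
  funext k
  exact hpow k

lemma dp_nonneg {k : Type*} [Fintype k] (x : k → ℝ) : 0 ≤ dotProduct x x :=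
  Finset.sum_nonneg fun _ _ => mul_self_nonneg _

/-- `(A_{Tᶜ}A_{Tᶜ}*)^k` converges to `I − A_T (A_T* A_T)⁻¹ A_T*`. -/
theorem stmt_10 {n N : ℕ} (hnN : n < N) (A : Matrix (Fin n) (Fin N) ℝ)
    (hParseval : A * Aᵀ = 1) (T : Finset (Fin N)) (hT : T.card < n)
    (hgram : IsUnit ((cols A T)ᵀ * cols A T))
    (hcompl : IsUnit (cols A Tᶜ * (cols A Tᶜ)ᵀ)) :
    Filter.Tendsto (fun k => (cols A Tᶜ * (cols A Tᶜ)ᵀ) ^ k) Filter.atTop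
      (nhds ((1 : Matrix (Fin n) (Fin n) ℝ) -
        cols A T * ((cols A T)ᵀ * cols A T)⁻¹ * (cols A T)ᵀ)) := by
  set M := cols A T with hM
  set C := cols A Tᶜ with hC
  set Gi := (Mᵀ * M)⁻¹ with hGi
  set P : Matrix (Fin n) (Fin n) ℝ := M * Gi * Mᵀ with hP
  set B : Matrix (Fin n) (Fin n) ℝ := C * Cᵀ with hB
  -- inverse facts
  have hinv1 : Gi * (Mᵀ * M) = 1 := Matrix.nonsing_inv_mul _ ((Matrix.isUnit_iff_isUnit_det _).mp hgram)
  have hinv2 : (Mᵀ * M) * Gi = 1 := Matrix.mul_nonsing_inv _ ((Matrix.isUnit_iff_isUnit_det _).mp hgram)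
  -- Parseval split
  have hsplit : M * Mᵀ + B = 1 := by
    rw [← hParseval]
    ext i j
    simp only [Matrix.add_apply, Matrix.mul_apply, hB, hM, hC, cols, Matrix.transpose_apply,
      Matrix.of_apply]
    rw [Finset.sum_coe_sort T (fun c => A i c * A j c),
      Finset.sum_coe_sort Tᶜ (fun c => A i c * A j c)]
    exact Finset.sum_add_sum_compl T _
  have hBeq : B = 1 - M * Mᵀ := by rw [← hsplit]; abel
  -- P is symmetric idempotent
  have hGisym : Giᵀ = Gi := by
    rw [hGi, Matrix.transpose_nonsing_inv, Matrix.transpose_mul, Matrix.transpose_transpose]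
  have hPsym : Pᵀ = P := by
    rw [hP, Matrix.transpose_mul, Matrix.transpose_mul, Matrix.transpose_transpose, hGisym,
      Matrix.mul_assoc]
  have hPM : P * M = M := by
    calc P * M = M * (Gi * (Mᵀ * M)) := by rw [hP]; simp only [Matrix.mul_assoc]
      _ = M := by rw [hinv1, Matrix.mul_one]
  have hMP : Mᵀ * P = Mᵀ := by
    calc Mᵀ * P = Mᵀ * M * Gi * Mᵀ := by rw [hP]; simp only [Matrix.mul_assoc]
      _ = Mᵀ := by rw [hinv2, Matrix.one_mul]
  have hPP : P * P = P := by
    rw [hP]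
    calc M * Gi * Mᵀ * (M * Gi * Mᵀ) = M * (Gi * (Mᵀ * M) * (Gi * Mᵀ)) := by
          simp only [Matrix.mul_assoc]
      _ = M * Gi * Mᵀ := by rw [hinv1, Matrix.one_mul, Matrix.mul_assoc]
  have hPG : P * (M * Mᵀ) = M * Mᵀ := by
    rw [← Matrix.mul_assoc, hPM]
  have hGP : M * Mᵀ * P = M * Mᵀ := by
    rw [Matrix.mul_assoc, hMP]
  set R : Matrix (Fin n) (Fin n) ℝ := P - M * Mᵀ with hR
  have hQR : B = (1 - P) + R := by rw [hBeq, hR, sub_add_sub_cancel]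
  have hRQ0 : R * (1 - P) = 0 := by
    simp only [hR, sub_mul, mul_sub, mul_one, hPP, hGP, sub_self, sub_zero]
  have hQR0 : (1 - P) * R = 0 := by
    simp only [hR, mul_sub, sub_mul, one_mul, hPP, hPG, sub_self, sub_zero]
  have hQQ : (1 - P) * (1 - P) = 1 - P := by
    simp only [mul_sub, sub_mul, one_mul, mul_one, hPP, sub_self, sub_zero]
  have hBpow : ∀ k : ℕ, B ^ (k + 1) = (1 - P) + R ^ (k + 1) := by
    intro k
    induction k with
    | zero => rw [pow_one, pow_one]; exact hQR
    | succ k ih =>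
      calc B ^ (k + 2) = B ^ (k + 1) * B := by rw [← pow_succ]
        _ = ((1 - P) + R ^ (k + 1)) * ((1 - P) + R) := by rw [ih, hQR]
        _ = (1 - P) * (1 - P) + (1 - P) * R + (R ^ (k + 1) * (1 - P) + R ^ (k + 1) * R) := by
            rw [Matrix.add_mul, Matrix.mul_add, Matrix.mul_add]
        _ = (1 - P) + R ^ (k + 2) := by
            simp only [hQQ, hQR0, add_zero, pow_succ, Matrix.mul_assoc, hRQ0, Matrix.mul_zero,
              zero_add, Matrix.zero_mul]
  -- R is hermitian
  have hRH : R.IsHermitian := by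
    have : Rᵀ = R := by
      rw [hR, Matrix.transpose_sub, hPsym, Matrix.transpose_mul, Matrix.transpose_transpose]
    rw [Matrix.IsHermitian]
    ext i j
    rw [Matrix.conjTranspose_apply, star_trivial]
    have h2 := congrFun (congrFun this i) j
    rw [Matrix.transpose_apply] at h2
    exact h2
  -- eigenvalue bounds
  have hev : ∀ i, |hRH.eigenvalues i| < 1 := by
    intro i
    set μ : ℝ := hRH.eigenvalues i with hμ
    have hvspec := hRH.mulVec_eigenvectorBasis i
    set v : Fin n → ℝ := ⇑(hRH.eigenvectorBasis i) with hv
    have hvne : v ≠ 0 := by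
      intro h0
      apply hRH.eigenvectorBasis.toBasis.ne_zero i
      rw [OrthonormalBasis.coe_toBasis]
      ext j
      exact congrFun h0 j
    have hs : 0 < v ⬝ᵥ v := by
      rcases lt_or_eq_of_le (dp_nonneg v) with h | h
      · exact h
      · exact absurd (dotProduct_self_eq_zero.mp h.symm) hvne
    set w : Fin n → ℝ := P *ᵥ v with hw
    set u : Fin n → ℝ := (1 - P) *ᵥ v with hu
    set y : { i // i ∈ T } → ℝ := Mᵀ *ᵥ v with hy
    have key1 : v ⬝ᵥ (P *ᵥ v) = w ⬝ᵥ w := by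
      rw [← hPP, ← Matrix.mulVec_mulVec, Matrix.dotProduct_mulVec, ← hPsym,
        Matrix.vecMul_transpose, hPsym]
    have key2 : v ⬝ᵥ ((1 - P) *ᵥ v) = u ⬝ᵥ u := by
      have hQsym : (1 - P)ᵀ = 1 - P := by
        rw [Matrix.transpose_sub, Matrix.transpose_one, hPsym]
      rw [← hQQ, ← Matrix.mulVec_mulVec, Matrix.dotProduct_mulVec, ← hQsym,
        Matrix.vecMul_transpose, hQsym]
    have key3 : v ⬝ᵥ ((M * Mᵀ) *ᵥ v) = y ⬝ᵥ y := by
      rw [← Matrix.mulVec_mulVec, Matrix.dotProduct_mulVec, ← Matrix.mulVec_transpose]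
    have E1 : μ * (v ⬝ᵥ v) = w ⬝ᵥ w - y ⬝ᵥ y := by
      calc μ * (v ⬝ᵥ v) = v ⬝ᵥ (μ • v) := by rw [dotProduct_smul]; rfl
        _ = v ⬝ᵥ (R *ᵥ v) := by rw [← hvspec]
        _ = v ⬝ᵥ (P *ᵥ v) - v ⬝ᵥ ((M * Mᵀ) *ᵥ v) := by
            rw [hR, Matrix.sub_mulVec, dotProduct_sub]
        _ = w ⬝ᵥ w - y ⬝ᵥ y := by rw [key1, key3]
    have E2 : v ⬝ᵥ v = w ⬝ᵥ w + u ⬝ᵥ u := by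
      have : v ⬝ᵥ v = v ⬝ᵥ ((P + (1 - P)) *ᵥ v) := by
        rw [add_sub_cancel, Matrix.one_mulVec]
      rw [this, Matrix.add_mulVec, dotProduct_add, key1, key2]
    -- 0 ≤ μ
    have hyw : Mᵀ *ᵥ w = y := by
      rw [hw, Matrix.mulVec_mulVec, hMP]
    have hBw : w ⬝ᵥ w - y ⬝ᵥ y = (Cᵀ *ᵥ w) ⬝ᵥ (Cᵀ *ᵥ w) := by
      have h1 : w ⬝ᵥ (B *ᵥ w) = (Cᵀ *ᵥ w) ⬝ᵥ (Cᵀ *ᵥ w) := by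
        rw [hB, ← Matrix.mulVec_mulVec, Matrix.dotProduct_mulVec, ← Matrix.mulVec_transpose]
      have h2 : w ⬝ᵥ ((M * Mᵀ) *ᵥ w) = y ⬝ᵥ y := by
        rw [← Matrix.mulVec_mulVec, Matrix.dotProduct_mulVec, ← Matrix.mulVec_transpose, hyw]
      rw [← h1, hBeq, Matrix.sub_mulVec, dotProduct_sub, Matrix.one_mulVec, h2]
    have hmu0 : 0 ≤ μ := by
      have h3 : 0 ≤ μ * (v ⬝ᵥ v) := by rw [E1, hBw]; exact dp_nonneg _
      by_contra hneg
      push_neg at hneg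
      exact absurd h3 (not_le.mpr (mul_neg_of_neg_of_pos hneg hs))
    have hmu1 : μ < 1 := by
      by_contra hge
      push_neg at hge
      have h4 : u ⬝ᵥ u + y ⬝ᵥ y = (1 - μ) * (v ⬝ᵥ v) := by
        rw [sub_mul, one_mul, E1, E2]; ring
      have h7 : (1 - μ) * (v ⬝ᵥ v) ≤ 0 :=
        mul_nonpos_of_nonpos_of_nonneg (by linarith) (le_of_lt hs)
      have h5 : u ⬝ᵥ u = 0 ∧ y ⬝ᵥ y = 0 := by
        have hu' := dp_nonneg u
        have hy' := dp_nonneg y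
        constructor <;> linarith [h4, h7]
      have hu0 : u = 0 := dotProduct_self_eq_zero.mp h5.1
      have hy0 : y = 0 := dotProduct_self_eq_zero.mp h5.2
      have hvw : v = w := by
        have h6 : v - w = u := by
          rw [hu, Matrix.sub_mulVec, Matrix.one_mulVec, ← hw]
        exact sub_eq_zero.mp (h6.trans hu0)
      have hw0 : w = 0 := by
        rw [hw, hP, ← Matrix.mulVec_mulVec, ← hy, hy0, Matrix.mulVec_zero]
      exact absurd (hvw.trans hw0) hvne
    rw [abs_lt]
    exact ⟨by linarith, hmu1⟩
  -- assemble
  have hR0 := herm_pow_tendsto_zero hRH hev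
  have hlim : Tendsto (fun k => (1 - P) + R ^ k) atTop (nhds ((1 - P) + 0)) :=
    tendsto_const_nhds.add hR0
  rw [add_zero] at hlim
  apply hlim.congr'
  filter_upwards [eventually_ge_atTop 1] with k hk
  obtain ⟨j, rfl⟩ := Nat.exists_eq_add_of_le hk
  rw [add_comm 1 j, hBpow j]
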